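/- For any positive integers n and q with q ≥ 2, the number of permutations of {1, ..., n} having no cycle of length divisible by q equals n! · ∏_{j=1}^{⌊n/q⌋} (1 - 1/(jq)). -/

import Mathlib

open Equiv Equiv.Perm Finset

section QFAux

noncomputable def bq (q d : ℕ) : ℝ := ∏ j ∈ Finset.Icc 1 d, (1 - 1 / ((j : ℝ) * q))

noncomputable def bb (q m : ℕ) : ℝ := bq q (m / q)

lemma bb_succ_of_not_dvd {q m : ℕ} (h : ¬ q ∣ (m+1)) : bb q (m+1) = bb q m := by
  rw [bb, bb, Nat.succ_div_of_not_dvd h]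

lemma bb_succ_of_dvd {q m : ℕ} (hq : 2 ≤ q) (h : q ∣ (m+1)) :
    bb q (m+1) = bb q m * (1 - 1 / ((m:ℝ)+1)) := by
  rw [bb, bb, Nat.succ_div_of_dvd h, bq, bq, Finset.prod_Icc_succ_top (Nat.le_add_left _ _)]
  congr 2
  have : ((m+1)/q) * q = m + 1 := Nat.div_mul_cancel h
  have := congrArg (fun x : ℕ => (x : ℝ)) this
  push_cast at this ⊢
  rw [Nat.succ_div_of_dvd h] at this
  push_cast at this
  rw [this]

lemma bb_mul_self_div {q m : ℕ} (hq : 0 < q) : bb q (m / q * q) = bb q m := by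
  rw [bb, bb, Nat.mul_div_cancel _ hq]

lemma arith (q : ℕ) (hq : 2 ≤ q) :
    ∀ N : ℕ, (∑ k ∈ range N, bb q k) - (∑ i ∈ range (N / q), bb q (i * q)) = N * bb q N := by
  intro N
  induction N with
  | zero => simp
  | succ N ih =>
    rw [Finset.sum_range_succ]
    by_cases h : q ∣ (N+1)
    · rw [Nat.succ_div_of_dvd h, Finset.sum_range_succ, bb_mul_self_div (by omega),
        bb_succ_of_dvd hq h]
      have hN1 : (N:ℝ) + 1 ≠ 0 := by positivity
      have : ((N:ℕ)+1 : ℝ) * (bb q N * (1 - 1 / ((N:ℝ)+1))) = N * bb q N := by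
        field_simp
        ring
      push_cast
      push_cast at ih
      rw [this]
      linarith [ih]
    · rw [Nat.succ_div_of_not_dvd h, bb_succ_of_not_dvd h]
      push_cast
      push_cast at ih
      linarith [ih]

lemma conv_lemma (q : ℕ) (hq : 0 < q) (N : ℕ) :
    ∑ k ∈ range N, (if q ∣ (N - k) then bb q k else 0) = ∑ i ∈ range (N / q), bb q (i * q) := by
  rw [← Finset.sum_filter]
  refine Finset.sum_nbij' (fun k => k / q) (fun i => N - (N / q - i) * q) ?_ ?_ ?_ ?_ ?_
  · intro k hk
    simp only [mem_filter, mem_range] at hk ⊢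
    obtain ⟨hkN, j, hj⟩ := hk
    have hj1 : 1 ≤ j := by rcases j with _ | j; · omega
                           · omega
    have hN : k + j * q = N := by rw [mul_comm]; omega
    have hdiv : N / q = k / q + j := by rw [← hN, Nat.add_mul_div_right _ _ hq]
    omega
  · intro i hi
    simp only [mem_range, mem_filter] at hi ⊢
    have h1 : (N / q - i) * q ≤ N / q * q := Nat.mul_le_mul_right _ (Nat.sub_le _ _)
    have h2 : N / q * q ≤ N := Nat.div_mul_le_self _ _
    have h3 : 1 * q ≤ (N / q - i) * q := Nat.mul_le_mul_right _ (by omega)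
    refine ⟨by omega, ?_⟩
    have : N - (N - (N / q - i) * q) = (N / q - i) * q := by omega
    rw [this]
    exact dvd_mul_left q _
  · intro k hk
    simp only [mem_filter, mem_range] at hk
    obtain ⟨hkN, j, hj⟩ := hk
    have hj1 : 1 ≤ j := by rcases j with _ | j; · omega
                           · omega
    have hN : k + j * q = N := by rw [mul_comm]; omega
    have hdiv : N / q = k / q + j := by rw [← hN, Nat.add_mul_div_right _ _ hq]
    have h5 : N / q - k / q = j := by omega
    simp only [h5]
    omega
  · intro i hi
    simp only [mem_range] at hi
    set j := N / q - i with hjdef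
    have h1 : j * q ≤ N / q * q := Nat.mul_le_mul_right _ (Nat.sub_le _ _)
    have h2 : N / q * q ≤ N := Nat.div_mul_le_self _ _
    have hN : (N - j * q) + j * q = N := by omega
    have hdiv : N / q = (N - j * q) / q + j := by
      conv_lhs => rw [← hN]
      rw [Nat.add_mul_div_right _ _ hq]
    show (N - j * q) / q = i
    omega
  · intro k hk
    exact (bb_mul_self_div hq).symm

noncomputable def Aq (q m : ℕ) : ℕ := Nat.card {π : Perm (Fin m) // ∀ c ∈ π.cycleType, ¬ q ∣ c}

lemma cycleType_permCongr {β γ : Type*} [Fintype β] [DecidableEq β] [Fintype γ] [DecidableEq γ]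
    (e : β ≃ γ) (π : Perm β) : (e.permCongr π).cycleType = π.cycleType := by
  classical
  have key : e.permCongr π = π.extendDomain (e.trans (Equiv.subtypeUnivEquiv (fun _ : γ => trivial)).symm) := by
    ext y
    rw [Perm.extendDomain_apply_subtype _ _ trivial]
    rfl
  rw [key, cycleType_extendDomain]

lemma cardQF (q : ℕ) {β : Type*} [Fintype β] [DecidableEq β] :
    Nat.card {π : Perm β // ∀ c ∈ π.cycleType, ¬ q ∣ c} =
      Nat.card {π : Perm (Fin (Fintype.card β)) // ∀ c ∈ π.cycleType, ¬ q ∣ c} := by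
  classical
  obtain ⟨e⟩ : Nonempty (β ≃ Fin (Fintype.card β)) := ⟨Fintype.equivFin β⟩
  refine Nat.card_congr (Equiv.subtypeEquiv (e.permCongr) ?_)
  intro π
  simp [cycleType_permCongr]

variable {α : Type*} [Fintype α] [DecidableEq α] {q : ℕ}

variable {α : Type*} [Fintype α] [DecidableEq α]

open List in
lemma countCyc (x₀ : α) (ℓ : ℕ) (hℓ : 2 ≤ ℓ) :
    Nat.card {c : Perm α // c.IsCycle ∧ x₀ ∈ c.support ∧ c.support.card = ℓ} =
      (Fintype.card α - 1).descFactorial (ℓ - 1) := by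
  classical
  have hcard : Fintype.card {x : α // x ≠ x₀} = Fintype.card α - 1 := by
    have h1 := Fintype.card_subtype_compl (p := fun x : α => x = x₀)
    rw [Fintype.card_subtype_eq] at h1
    exact h1
  -- the forward map
  have key : ∀ (c : Perm α), c.IsCycle → x₀ ∈ c.support → c.support.card = ℓ →
      ∀ m k : ℕ, m < ℓ → k < ℓ → (c ^ m) x₀ = (c ^ k) x₀ → m = k := by
    intro c hc hx hcc m k hm hk hmk
    have hco : c.IsCycleOn ↑c.support := by
      rw [coe_support_eq_set_support]; exact hc.isCycleOn
    have := (hco.pow_apply_eq_pow_apply (by exact_mod_cast hx)).mp hmk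
    rw [hcc] at this
    have h1 := this.symm
    unfold Nat.ModEq at this
    rw [Nat.mod_eq_of_lt hm, Nat.mod_eq_of_lt hk] at this
    exact this
  set F : {c : Perm α // c.IsCycle ∧ x₀ ∈ c.support ∧ c.support.card = ℓ} →
      (Fin (ℓ - 1) ↪ {x : α // x ≠ x₀}) := fun ⟨c, hc, hx, hcc⟩ =>
    ⟨fun i => ⟨(c ^ ((i : ℕ) + 1)) x₀, by
        intro h
        have := key c hc hx hcc ((i:ℕ)+1) 0 (by omega) (by omega) (by simpa using h)
        omega⟩,
      by
        intro i j hij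
        have h1 : (c ^ ((i:ℕ)+1)) x₀ = (c ^ ((j:ℕ)+1)) x₀ := congrArg Subtype.val hij
        have := key c hc hx hcc ((i:ℕ)+1) ((j:ℕ)+1) (by omega) (by omega) h1
        exact Fin.ext (by omega)⟩ with hF
  have hbij : Function.Bijective F := by
    constructor
    · rintro ⟨c, hc, hx, hcc⟩ ⟨c', hc', hx', hcc'⟩ h
      have hiter : ∀ i : Fin (ℓ - 1), (c ^ ((i:ℕ)+1)) x₀ = (c' ^ ((i:ℕ)+1)) x₀ := by
        intro i
        have := congrFun (congrArg (fun (g : Fin (ℓ-1) ↪ {x : α // x ≠ x₀}) => (g : Fin (ℓ-1) → {x : α // x ≠ x₀})) h) i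
        exact congrArg Subtype.val this
      have htl : toList c x₀ = toList c' x₀ := by
        rw [Equiv.Perm.toList, Equiv.Perm.toList, hc.cycleOf_eq (mem_support.mp hx), hc'.cycleOf_eq (mem_support.mp hx'),
          hcc, hcc']
        apply List.ext_getElem (by simp)
        intro k hk _
        rw [List.length_iterate] at hk
        rw [List.getElem_iterate, List.getElem_iterate]
        rcases k with _ | k
        · rfl
        · have := hiter ⟨k, by omega⟩
          simpa [Equiv.Perm.coe_pow] using this
      have e1 : c = formPerm (toList c x₀) := by
        rw [formPerm_toList, hc.cycleOf_eq (mem_support.mp hx)]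
      have e2 : c' = formPerm (toList c' x₀) := by
        rw [formPerm_toList, hc'.cycleOf_eq (mem_support.mp hx')]
      refine Subtype.ext ?_
      show c = c'
      rw [e1, e2, htl]
    · intro g
      set l : List α := x₀ :: List.ofFn (fun i : Fin (ℓ - 1) => (g i : α)) with hl
      have hlen : l.length = ℓ := by simp [hl]; omega
      have hnd : l.Nodup := by
        rw [hl, List.nodup_cons]
        constructor
        · intro hmem
          rw [List.mem_ofFn] at hmem
          obtain ⟨i, hi⟩ := hmem
          exact (g i).2 hi
        · rw [List.nodup_ofFn]
          intro i j hij
          exact g.injective (Subtype.ext hij)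
      have hcyc : (formPerm l).IsCycle := List.isCycle_formPerm hnd (by omega)
      have hsupp : (formPerm l).support = l.toFinset := by
        refine support_formPerm_of_nodup l hnd ?_
        intro x hx
        rw [hx] at hlen
        simp at hlen
        omega
      have hsc : (formPerm l).support.card = ℓ := by
        rw [hsupp, List.toFinset_card_of_nodup hnd, hlen]
      have hx₀ : x₀ ∈ (formPerm l).support := by
        rw [hsupp, List.mem_toFinset, hl]
        exact List.mem_cons_self
      refine ⟨⟨formPerm l, hcyc, hx₀, hsc⟩, ?_⟩
      ext i
      show ((formPerm l ^ ((i:ℕ)+1)) x₀ : α) = (g i : α)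
      rw [hl, List.formPerm_pow_apply_head _ _ hnd]
      have hmod : ((i:ℕ)+1) % (x₀ :: List.ofFn (fun i : Fin (ℓ - 1) => (g i : α))).length = (i:ℕ)+1 := by
        apply Nat.mod_eq_of_lt
        simp only [List.length_cons, List.length_ofFn]
        omega
      simp only [hmod]
      rw [List.getElem_cons_succ]
      simp
  rw [Nat.card_eq_of_bijective F hbij, Nat.card_eq_fintype_card,
    Fintype.card_embedding_eq, hcard, Fintype.card_fin]

variable {α : Type*} [Fintype α] [DecidableEq α] {q : ℕ}

lemma fiberCard (x₀ : α) (c : Perm α) (hc : c = 1 ∨ (c.IsCycle ∧ x₀ ∈ c.support))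
    (hQc : ∀ d ∈ c.cycleType, ¬ q ∣ d) :
    Nat.card {π : Perm α // (∀ d ∈ π.cycleType, ¬ q ∣ d) ∧ π.cycleOf x₀ = c} =
      Nat.card {τ : Perm {x : α // x ∉ insert x₀ c.support} // ∀ d ∈ τ.cycleType, ¬ q ∣ d} := by
  classical
  set S : Finset α := insert x₀ c.support with hS
  set p : α → Prop := fun x => x ∉ S with hp
  have hsuppS : ∀ x, c x ≠ x → x ∈ S := by
    intro x hx
    exact Finset.mem_insert_of_mem (mem_support.mpr hx)
  set ext : Perm {x : α // p x} → Perm α := fun τ => τ.extendDomain (Equiv.refl _) with hext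
  have hext_mem : ∀ τ (x : α) (hx : p x), ext τ x = (τ ⟨x, hx⟩ : α) := by
    intro τ x hx
    rw [hext]
    exact Perm.extendDomain_apply_subtype _ _ hx
  have hext_nmem : ∀ τ (x : α), ¬ p x → ext τ x = x := by
    intro τ x hx
    exact Perm.extendDomain_apply_not_subtype _ _ hx
  have hdisj : ∀ τ, Disjoint c (ext τ) := by
    intro τ x
    by_cases hx : x ∈ S
    · right; exact hext_nmem τ x (by simpa [hp] using hx)
    · left
      by_contra h
      exact hx (hsuppS x h)
  have hcycleOf : ∀ τ, (c * ext τ).cycleOf x₀ = c := by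
    intro τ
    have hfix : ext τ x₀ = x₀ := hext_nmem τ x₀ (by simp [hp, hS])
    rw [cycleOf_mul_of_apply_right_eq_self (hdisj τ).commute x₀ hfix]
    rcases hc with rfl | ⟨hcy, hx⟩
    · exact cycleOf_one x₀
    · exact hcy.cycleOf_eq (mem_support.mp hx)
  have hQ : ∀ τ, (c * ext τ).cycleType = c.cycleType + τ.cycleType := by
    intro τ
    rw [(hdisj τ).cycleType_mul, hext, cycleType_extendDomain]
  set G : {τ : Perm {x : α // p x} // ∀ d ∈ τ.cycleType, ¬ q ∣ d} →
      {π : Perm α // (∀ d ∈ π.cycleType, ¬ q ∣ d) ∧ π.cycleOf x₀ = c} := fun ⟨τ, hτ⟩ =>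
    ⟨c * ext τ, by
      intro d hd
      rw [hQ τ, Multiset.mem_add] at hd
      rcases hd with hd | hd
      · exact hQc d hd
      · exact hτ d hd, hcycleOf τ⟩ with hG
  have hbij : Function.Bijective G := by
    constructor
    · rintro ⟨τ, hτ⟩ ⟨τ', hτ'⟩ h
      have h1 : c * ext τ = c * ext τ' := congrArg Subtype.val h
      have h2 : ext τ = ext τ' := by
        exact mul_left_cancel h1
      refine Subtype.ext ?_
      ext x
      have h3 : ext τ (x : α) = ext τ' (x : α) := by rw [h2]
      rw [hext_mem τ _ x.2, hext_mem τ' _ x.2] at h3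
      exact h3
    · rintro ⟨π, hπ, hcyc⟩
      -- S is the same-cycle set of x₀
      have hSiff : ∀ y, y ∈ S ↔ π.SameCycle x₀ y := by
        intro y
        rw [hS, ← hcyc, Finset.mem_insert]
        constructor
        · rintro (rfl | hy)
          · exact SameCycle.refl _ _
          · exact (mem_support_cycleOf_iff.mp hy).1
        · intro hy
          by_cases hx₀ : x₀ ∈ π.support
          · right; exact mem_support_cycleOf_iff.mpr ⟨hy, hx₀⟩
          · left
            obtain ⟨i, hi⟩ := hy
            rw [notMem_support] at hx₀
            rw [← hi]
            exact zpow_apply_eq_self_of_apply_eq_self hx₀ i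
      have hinv : ∀ x, p x ↔ p (π x) := by
        intro x
        simp only [hp, hSiff, not_iff_not]
        exact (Equiv.Perm.sameCycle_apply_right).symm
      set τ : Perm {x : α // p x} := π.subtypePerm (fun x => (hinv x).symm) with hτdef
      have hπeq : π = c * ext τ := by
        ext x
        by_cases hx : x ∈ S
        · have h1 : ext τ x = x := hext_nmem τ x (by simp [hp, hx])
          rw [Perm.mul_apply, h1, ← hcyc]
          exact ((hSiff x).mp hx).cycleOf_apply.symm
        · have px : p x := hx
          have h1 : ext τ x = π x := by
            rw [hext_mem τ x px]
            rfl
          rw [Perm.mul_apply, h1]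
          have hπx : π x ∉ S := by
            have := (hinv x).mp px
            simpa [hp] using this
          have hfix : c (π x) = π x := by
            by_contra h
            exact hπx (hsuppS _ h)
          exact hfix.symm
      have hQτ : ∀ d ∈ τ.cycleType, ¬ q ∣ d := by
        intro d hd
        apply hπ d
        rw [hπeq, hQ τ, Multiset.mem_add]
        exact Or.inr hd
      exact ⟨⟨τ, hQτ⟩, Subtype.ext hπeq.symm⟩
  exact (Nat.card_eq_of_bijective G hbij).symm

end QFAux

lemma Arec (q : ℕ) (hq : 2 ≤ q) (n : ℕ) :
    Aq q (n+1) = ∑ ℓ ∈ Icc 1 (n+1),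
      (if q ∣ ℓ then 0 else n.descFactorial (ℓ-1) * Aq q (n+1-ℓ)) := by
  classical
  set α := Fin (n+1)
  set x₀ : α := 0
  set QF : Perm α → Prop := fun π => ∀ d ∈ π.cycleType, ¬ q ∣ d with hQF
  set P : Finset (Perm α) := univ.filter QF with hP
  set T : Finset (Perm α) :=
    univ.filter (fun c => (c = 1 ∨ (c.IsCycle ∧ x₀ ∈ c.support)) ∧ ∀ d ∈ c.cycleType, ¬ q ∣ d)
    with hT
  set lenc : Perm α → ℕ := fun c => (insert x₀ c.support).card with hlenc
  have hA : Aq q (n+1) = P.card := by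
    rw [Aq, Nat.card_eq_fintype_card, Fintype.card_subtype]
  -- the fibration map lands in T
  have hmapsT : ∀ π ∈ P, π.cycleOf x₀ ∈ T := by
    intro π hπ
    rw [hP, mem_filter] at hπ
    obtain ⟨-, hπQ⟩ := hπ
    rw [hT, mem_filter]
    refine ⟨mem_univ _, ?_, ?_⟩
    · by_cases hx : π x₀ = x₀
      · left; exact (cycleOf_eq_one_iff π).mpr hx
      · right
        exact ⟨isCycle_cycleOf π hx,
          mem_support_cycleOf_iff.mpr ⟨SameCycle.refl _ _, mem_support.mpr hx⟩⟩
    · by_cases hx : π x₀ = x₀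
      · rw [(cycleOf_eq_one_iff π).mpr hx, cycleType_one]
        simp
      · intro d hd
        rw [(isCycle_cycleOf π hx).cycleType] at hd
        simp only [Multiset.coe_singleton, Multiset.mem_singleton] at hd
        subst hd
        apply hπQ
        rw [cycleType_def]
        exact Multiset.mem_map_of_mem _
          (by rw [← Finset.mem_def]; exact cycleOf_mem_cycleFactorsFinset_iff.mpr (mem_support.mpr hx))
  have step1 : P.card = ∑ c ∈ T, (P.filter (fun π => π.cycleOf x₀ = c)).card :=
    Finset.card_eq_sum_card_fiberwise hmapsT
  -- each fiber
  have hfiber : ∀ c ∈ T, (P.filter (fun π => π.cycleOf x₀ = c)).card = Aq q (n+1 - lenc c) := by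
    intro c hc
    rw [hT, mem_filter] at hc
    obtain ⟨-, hcand, hQc⟩ := hc
    have h1 : (P.filter (fun π => π.cycleOf x₀ = c)).card
        = Nat.card {π : Perm α // QF π ∧ π.cycleOf x₀ = c} := by
      rw [hP, Finset.filter_filter, Nat.card_eq_fintype_card, Fintype.card_subtype]
    rw [h1, hQF]
    rw [fiberCard x₀ c hcand hQc, cardQF q]
    congr 1
    rw [Fintype.card_subtype_compl, Fintype.card_coe, Fintype.card_fin]
  -- group by length
  have hmapsL : ∀ c ∈ T, lenc c ∈ Icc 1 (n+1) := by
    intro c _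
    rw [mem_Icc]
    constructor
    · rw [hlenc]
      exact Nat.one_le_iff_ne_zero.mpr (by simp [Finset.insert_ne_empty, Finset.card_eq_zero])
    · calc lenc c ≤ Fintype.card α := Finset.card_le_univ _
        _ = n+1 := Fintype.card_fin _
  have step2 : ∑ c ∈ T, Aq q (n+1 - lenc c)
      = ∑ ℓ ∈ Icc 1 (n+1), ∑ c ∈ T.filter (fun c => lenc c = ℓ), Aq q (n+1 - lenc c) :=
    (Finset.sum_fiberwise_of_maps_to hmapsL _).symm
  have step3 : ∀ ℓ ∈ Icc 1 (n+1), ∑ c ∈ T.filter (fun c => lenc c = ℓ), Aq q (n+1 - lenc c)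
      = (T.filter (fun c => lenc c = ℓ)).card * Aq q (n+1-ℓ) := by
    intro ℓ hℓ
    calc ∑ c ∈ T.filter (fun c => lenc c = ℓ), Aq q (n+1 - lenc c)
        = ∑ _c ∈ T.filter (fun c => lenc c = ℓ), Aq q (n+1 - ℓ) := by
          refine Finset.sum_congr rfl fun c hc => ?_
          rw [mem_filter] at hc
          rw [hc.2]
      _ = _ := by rw [Finset.sum_const, smul_eq_mul]
  -- count the fibers of lenc
  have hcount : ∀ ℓ ∈ Icc 1 (n+1), (T.filter (fun c => lenc c = ℓ)).card
      = if q ∣ ℓ then 0 else n.descFactorial (ℓ-1) := by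
    intro ℓ hℓ
    rw [mem_Icc] at hℓ
    have hq1 : ¬ q ∣ 1 := fun h => by
      have := Nat.le_of_dvd one_pos h
      omega
    rcases eq_or_lt_of_le hℓ.1 with h1 | h2
    · -- ℓ = 1
      have hfilter : T.filter (fun c => lenc c = ℓ) = {1} := by
        ext c
        simp only [mem_filter, mem_singleton, hT, mem_univ, true_and]
        constructor
        · rintro ⟨⟨hcand, hQc⟩, hl⟩
          rcases hcand with rfl | ⟨hcy, hx⟩
          · rfl
          · exfalso
            have hins : insert x₀ c.support = c.support := Finset.insert_eq_self.mpr hx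
            rw [hlenc] at hl
            simp only [hins] at hl
            have := hcy.two_le_card_support
            omega
        · rintro rfl
          refine ⟨⟨Or.inl rfl, by rw [cycleType_one]; simp⟩, ?_⟩
          rw [hlenc]
          simp [Equiv.Perm.support_one, ← h1]
      rw [hfilter, ← h1, if_neg hq1]
      simp
    · -- 2 ≤ ℓ
      by_cases hdvd : q ∣ ℓ
      · rw [if_pos hdvd, Finset.card_eq_zero, Finset.filter_eq_empty_iff]
        intro c hc
        rw [hT, mem_filter] at hc
        obtain ⟨-, hcand, hQc⟩ := hc
        intro hl
        rcases hcand with rfl | ⟨hcy, hx⟩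
        · rw [hlenc] at hl
          simp [Equiv.Perm.support_one] at hl
          omega
        · have hins : insert x₀ c.support = c.support := Finset.insert_eq_self.mpr hx
          rw [hlenc] at hl
          simp only [hins] at hl
          refine hQc ℓ ?_ hdvd
          rw [hcy.cycleType, ← hl]
          simp
      · rw [if_neg hdvd]
        have hfe : T.filter (fun c => lenc c = ℓ)
            = univ.filter (fun c : Perm α => c.IsCycle ∧ x₀ ∈ c.support ∧ c.support.card = ℓ) := by
          ext c
          simp only [mem_filter, mem_univ, true_and, hT]
          constructor
          · rintro ⟨⟨hcand, hQc⟩, hl⟩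
            rcases hcand with rfl | ⟨hcy, hx⟩
            · rw [hlenc] at hl
              simp [Equiv.Perm.support_one] at hl
              omega
            · have hins : insert x₀ c.support = c.support := Finset.insert_eq_self.mpr hx
              rw [hlenc] at hl
              simp only [hins] at hl
              exact ⟨hcy, hx, hl⟩
          · rintro ⟨hcy, hx, hcard⟩
            have hins : insert x₀ c.support = c.support := Finset.insert_eq_self.mpr hx
            refine ⟨⟨Or.inr ⟨hcy, hx⟩, ?_⟩, by rw [hlenc]; simp only [hins]; exact hcard⟩
            intro d hd
            rw [hcy.cycleType] at hd
            simp only [Multiset.coe_singleton, Multiset.mem_singleton] at hd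
            subst hd
            rw [hcard]
            exact hdvd
        rw [hfe]
        have hcc := countCyc (α := α) x₀ ℓ h2
        rw [Nat.card_eq_fintype_card, Fintype.card_subtype] at hcc
        rw [hcc]
        have hca : Fintype.card α = n + 1 := Fintype.card_fin _
        rw [hca]
        simp
  rw [hA, step1, Finset.sum_congr rfl hfiber, step2, Finset.sum_congr rfl step3]
  refine Finset.sum_congr rfl fun ℓ hℓ => ?_
  rw [hcount ℓ hℓ]
  split
  · simp
  · rfl

lemma Aq_zero (q : ℕ) : Aq q 0 = 1 := by
  rw [Aq, Nat.card_eq_fintype_card]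
  refine Fintype.card_eq_one_iff.mpr ⟨⟨1, by rw [cycleType_one]; simp⟩, ?_⟩
  rintro ⟨π, hπ⟩
  refine Subtype.ext ?_
  ext i
  exact i.elim0

lemma bb_zero (q : ℕ) : bb q 0 = 1 := by
  rw [bb, Nat.zero_div, bq]
  simp

lemma Amain (q : ℕ) (hq : 2 ≤ q) : ∀ N, (Aq q N : ℝ) = N.factorial * bb q N := by
  intro N
  induction N using Nat.strong_induction_on with
  | _ N ih =>
    match N with
    | 0 => rw [Aq_zero, bb_zero]; simp
    | (N+1) =>
      rw [Arec q hq N, Nat.cast_sum]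
      have step1 : ∀ ℓ ∈ Icc 1 (N+1),
          ((if q ∣ ℓ then 0 else N.descFactorial (ℓ-1) * Aq q (N+1-ℓ) : ℕ) : ℝ)
          = (N.factorial : ℝ) * (if q ∣ ℓ then 0 else bb q (N+1-ℓ)) := by
        intro ℓ hℓ
        rw [mem_Icc] at hℓ
        split
        · simp
        · rw [Nat.cast_mul, ih (N+1-ℓ) (by omega)]
          have hnat : (N+1-ℓ).factorial * N.descFactorial (ℓ-1) = N.factorial := by
            have h := Nat.factorial_mul_descFactorial (show ℓ-1 ≤ N by omega)
            rw [show N - (ℓ-1) = N+1-ℓ by omega] at h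
            exact h
          have : ((N+1-ℓ).factorial : ℝ) * (N.descFactorial (ℓ-1) : ℝ) = (N.factorial : ℝ) := by
            exact_mod_cast congrArg (fun x : ℕ => (x : ℝ)) hnat
          calc (N.descFactorial (ℓ-1) : ℝ) * (((N+1-ℓ).factorial : ℝ) * bb q (N+1-ℓ))
              = (((N+1-ℓ).factorial : ℝ) * (N.descFactorial (ℓ-1) : ℝ)) * bb q (N+1-ℓ) := by ring
            _ = (N.factorial : ℝ) * bb q (N+1-ℓ) := by rw [this]
      rw [Finset.sum_congr rfl step1, ← Finset.mul_sum]
      have step2 : ∑ ℓ ∈ Icc 1 (N+1), (if q ∣ ℓ then (0:ℝ) else bb q (N+1-ℓ))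
          = ∑ k ∈ range (N+1), (if q ∣ (N+1-k) then (0:ℝ) else bb q k) := by
        refine Finset.sum_nbij' (fun ℓ => N+1-ℓ) (fun k => N+1-k) ?_ ?_ ?_ ?_ ?_
        · intro ℓ hℓ; rw [mem_Icc] at hℓ; simp only [mem_range]; omega
        · intro k hk; rw [mem_range] at hk; simp only [mem_Icc]; omega
        · intro ℓ hℓ; rw [mem_Icc] at hℓ; show N+1-(N+1-ℓ) = ℓ; omega
        · intro k hk; rw [mem_range] at hk; show N+1-(N+1-k) = k; omega
        · intro ℓ hℓ
          rw [mem_Icc] at hℓ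
          show _ = (if q ∣ (N+1-(N+1-ℓ)) then (0:ℝ) else bb q (N+1-ℓ))
          rw [show N+1-(N+1-ℓ) = ℓ from by omega]
      rw [step2]
      have step3 : ∑ k ∈ range (N+1), (if q ∣ (N+1-k) then (0:ℝ) else bb q k)
          = (∑ k ∈ range (N+1), bb q k) - ∑ k ∈ range (N+1), (if q ∣ (N+1-k) then bb q k else 0) := by
        rw [← Finset.sum_sub_distrib]
        refine Finset.sum_congr rfl fun k _ => ?_
        split <;> ring
      rw [step3, conv_lemma q (by omega) (N+1), arith q hq (N+1)]
      push_cast [Nat.factorial_succ]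
      ring

theorem stmt_14 (n q : ℕ) (hn : 0 < n) (hq : 2 ≤ q) :
    (Nat.card {π : Equiv.Perm (Fin n) // ∀ c ∈ π.cycleType, ¬ q ∣ c} : ℝ) =
      Nat.factorial n * ∏ j ∈ Finset.Icc 1 (n / q), (1 - 1 / ((j : ℝ) * q)) := by
  exact Amain q hq n
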